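/- Let 𝒜 ∈ ℝ^{m×m} be a matrix all of whose eigenvalues have strictly negative real part (an asymptotically stable matrix), and let ℬ ∈ ℝ^{m×p}. Then: (i) there exists a unique symmetric matrix P ∈ ℝ^{m×m} satisfying the Lyapunov equation 𝒜P + P𝒜ᵀ + ℬℬᵀ = 0, and this P is positive semidefinite; and (ii) for any symmetric initial condition P_0 ∈ ℝ^{m×m}, the solution P(t) of the matrix differential equation dP/dt = 𝒜P(t) + P(t)𝒜ᵀ + ℬℬᵀ, P(0) = P_0, converges to P as t → ∞. -/

import Mathlib

noncomputable section
open Matrix Filter NormedSpace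

attribute [local instance] Matrix.linftyOpNormedRing Matrix.linftyOpNormedAlgebra

variable {m : ℕ}

lemma aux_pow_exp (n : ℕ) {b : ℝ} (hb : b < 0) :
    Tendsto (fun t : ℝ => t ^ n * Real.exp (b * t)) atTop (nhds 0) := by
  have h1 : Tendsto (fun x : ℝ => x ^ n * Real.exp (-x)) atTop (nhds 0) :=
    Real.tendsto_pow_mul_exp_neg_atTop_nhds_zero n
  have h2 : Tendsto (fun t : ℝ => (-b) * t) atTop atTop :=
    Tendsto.const_mul_atTop (by linarith) tendsto_id
  have h4 : Tendsto (fun t : ℝ => ((-b) ^ n)⁻¹ * (((-b) * t) ^ n * Real.exp (-((-b) * t))))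
      atTop (nhds 0) := by
    simpa using (h1.comp h2).const_mul ((-b) ^ n)⁻¹
  refine h4.congr fun t => ?_
  have hbn : ((-b) ^ n) ≠ 0 := pow_ne_zero _ (by linarith)
  have h5 : -((-b) * t) = b * t := by ring
  rw [h5, mul_pow, ← mul_assoc, ← mul_assoc, inv_mul_cancel₀ hbn, one_mul]

/-- The continuous linear map `M ↦ M.mulVec v`. -/
def mulVecCLM (v : Fin m → ℂ) : Matrix (Fin m) (Fin m) ℂ →L[ℂ] (Fin m → ℂ) :=
  LinearMap.toContinuousLinearMap
    { toFun := fun M => M.mulVec v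
      map_add' := fun M N => Matrix.add_mulVec M N v
      map_smul' := fun c M => Matrix.smul_mulVec c M v }

lemma mulVecCLM_apply (v : Fin m → ℂ) (M : Matrix (Fin m) (Fin m) ℂ) :
    mulVecCLM v M = M.mulVec v := rfl

lemma vec_decay (A : Matrix (Fin m) (Fin m) ℂ)
    (h : ∀ μ ∈ spectrum ℂ A, μ.re < 0) (v : Fin m → ℂ) :
    Tendsto (fun t : ℝ => (exp (t • A)).mulVec v) atTop (nhds 0) := by
  classical
  set f : Module.End ℂ (Fin m → ℂ) := Matrix.toLinAlgEquiv' A with hf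
  have htop : ⨆ (μ : ℂ), f.maxGenEigenspace μ = ⊤ :=
    Module.End.iSup_maxGenEigenspace_eq_top f
  have hv : v ∈ ⨆ (μ : ℂ), f.maxGenEigenspace μ := htop ▸ Submodule.mem_top
  refine Submodule.iSup_induction (motive := fun w => Tendsto (fun t : ℝ => (exp (t • A)).mulVec w)
      atTop (nhds 0)) _ hv ?_ (by simp [Matrix.mulVec_zero, tendsto_const_nhds]) ?_
  swap
  · intro x y hx hy
    have := hx.add hy
    simp only [add_zero] at this
    exact this.congr fun t => by rw [Matrix.mulVec_add]
  rintro μ w hw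
  by_cases hw0 : w = 0
  · simp [hw0, Matrix.mulVec_zero, tendsto_const_nhds]
  obtain ⟨k, hk⟩ := (Module.End.mem_maxGenEigenspace f μ w).mp hw
  -- μ has negative real part
  have hμ : μ.re < 0 := by
    apply h
    have hev : f.HasEigenvalue μ := by
      apply Module.End.hasEigenvalue_of_hasGenEigenvalue (k := k)
      rw [Module.End.hasGenEigenvalue_iff]
      intro hbot
      apply hw0
      have hwk : w ∈ f.genEigenspace μ k := Module.End.mem_genEigenspace_nat.mpr hk
      rw [hbot] at hwk
      simpa using hwk
    have := Module.End.hasEigenvalue_iff_mem_spectrum.mp hev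
    rwa [AlgEquiv.spectrum_eq (Matrix.toLinAlgEquiv') A] at this
  -- the nilpotent part
  set N : Matrix (Fin m) (Fin m) ℂ := A - μ • 1 with hN
  have hNw : (N ^ k).mulVec w = 0 := by
    have hfN : (f - μ • 1) ^ k = Matrix.toLinAlgEquiv' (N ^ k) := by
      rw [map_pow, map_sub, _root_.map_smul, _root_.map_one]
    rw [hfN, Matrix.toLinAlgEquiv'_apply] at hk
    exact hk
  have hNn : ∀ n, k ≤ n → (N ^ n).mulVec w = 0 := by
    intro n hn
    have hpow : N ^ n = N ^ (n - k) * N ^ k := by rw [← pow_add]; congr 1; omega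
    rw [hpow, ← Matrix.mulVec_mulVec, hNw, Matrix.mulVec_zero]
  -- key formula
  have hRS : ∀ (s : ℝ) (M : Matrix (Fin m) (Fin m) ℂ), s • M = (s : ℂ) • M :=
    fun s M => (algebraMap_smul ℂ s M).symm
  -- key formula
  have key : ∀ t : ℝ, (exp (t • A)).mulVec w
      = Complex.exp (t * μ) • ∑ n ∈ Finset.range k,
          ((t : ℂ) ^ n * ((n.factorial : ℂ))⁻¹) • (N ^ n).mulVec w := by
    intro t
    rw [hRS]
    have hsplit : (t : ℂ) • A = ((t : ℂ) * μ) • (1 : Matrix (Fin m) (Fin m) ℂ) + (t : ℂ) • N := by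
      rw [hN, smul_sub, smul_smul]; abel
    have hcomm : Commute (((t : ℂ) * μ) • (1 : Matrix (Fin m) (Fin m) ℂ)) ((t : ℂ) • N) :=
      ((Commute.one_left N).smul_left _).smul_right _
    have hexp1 : exp (((t : ℂ) * μ) • (1 : Matrix (Fin m) (Fin m) ℂ))
        = Complex.exp ((t : ℂ) * μ) • (1 : Matrix (Fin m) (Fin m) ℂ) := by
      rw [← Algebra.algebraMap_eq_smul_one, ← Algebra.algebraMap_eq_smul_one, Complex.exp_eq_exp_ℂ]
      exact (map_exp (algebraMap ℂ (Matrix (Fin m) (Fin m) ℂ)) (continuous_algebraMap _ _) _).symm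
    have hexpN : (exp ((t : ℂ) • N)).mulVec w
        = ∑ n ∈ Finset.range k, ((t : ℂ) ^ n * ((n.factorial : ℂ))⁻¹) • (N ^ n).mulVec w := by
      rw [exp_eq_tsum ℂ, ← mulVecCLM_apply w, (mulVecCLM w).map_tsum (expSeries_summable' _)]
      rw [tsum_eq_sum (s := Finset.range k) ?_]
      · refine Finset.sum_congr rfl fun n _ => ?_
        rw [mulVecCLM_apply, smul_pow, Matrix.smul_mulVec, Matrix.smul_mulVec,
          smul_smul, mul_comm ((n.factorial : ℂ))⁻¹]
      · intro n hn
        rw [mulVecCLM_apply, smul_pow, Matrix.smul_mulVec, Matrix.smul_mulVec,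
          hNn n (by simpa using hn), smul_zero, smul_zero]
    rw [hsplit, Matrix.exp_add_of_commute _ _ hcomm, hexp1, smul_mul_assoc, one_mul,
      Matrix.smul_mulVec, hexpN]
  -- now take limits
  have hsum_t : Tendsto (fun t : ℝ => ∑ n ∈ Finset.range k,
      (Complex.exp (t * μ) * ((t : ℂ) ^ n * ((n.factorial : ℂ))⁻¹)) • (N ^ n).mulVec w)
      atTop (nhds 0) := by
    have h0 : (0 : Fin m → ℂ) = ∑ _n ∈ Finset.range k, (0 : Fin m → ℂ) := by simp
    rw [h0]
    refine tendsto_finset_sum _ fun n _ => ?_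
    have hc : Tendsto (fun t : ℝ => Complex.exp (t * μ) * ((t : ℂ) ^ n * ((n.factorial : ℂ))⁻¹))
        atTop (nhds 0) := by
      apply squeeze_zero_norm'
        (a := fun t => ((n.factorial : ℝ))⁻¹ * (t ^ n * Real.exp (μ.re * t)))
      · filter_upwards [eventually_ge_atTop (0 : ℝ)] with t ht
        have hnorm : ‖Complex.exp (t * μ) * ((t : ℂ) ^ n * ((n.factorial : ℂ))⁻¹)‖
            = Real.exp (t * μ.re) * (t ^ n * ((n.factorial : ℝ))⁻¹) := by
          rw [norm_mul, norm_mul, norm_pow, norm_inv]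
          simp [Complex.norm_exp, abs_of_nonneg ht]
        rw [hnorm, mul_comm t μ.re]
        ring_nf
        exact le_refl _
      · have := (aux_pow_exp n hμ).const_mul ((n.factorial : ℝ))⁻¹
        simpa using this
    have := hc.smul_const ((N ^ n).mulVec w)
    simpa using this
  refine hsum_t.congr fun t => ?_
  rw [key t, Finset.smul_sum]
  exact (Finset.sum_congr rfl fun n _ => (smul_smul _ _ _)).symm

lemma entry_decay_complex (A : Matrix (Fin m) (Fin m) ℂ)
    (h : ∀ μ ∈ spectrum ℂ A, μ.re < 0) (i j : Fin m) :
    Tendsto (fun t : ℝ => exp (t • A) i j) atTop (nhds 0) := by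
  have := vec_decay A h (Pi.single j 1)
  have hcomp := (tendsto_pi_nhds.mp this) i
  refine hcomp.congr fun t => ?_
  rw [Matrix.mulVec_single]
  simp

lemma entry_decay (𝒜 : Matrix (Fin m) (Fin m) ℝ)
    (h : ∀ μ ∈ spectrum ℂ (𝒜.map Complex.ofReal), μ.re < 0) (i j : Fin m) :
    Tendsto (fun t : ℝ => exp (t • 𝒜) i j) atTop (nhds 0) := by
  have hmap : ∀ t : ℝ, (exp (t • 𝒜)).map Complex.ofReal
      = exp (t • 𝒜.map Complex.ofReal) := by
    intro t
    have hcont : Continuous (fun M : Matrix (Fin m) (Fin m) ℝ => M.map Complex.ofReal) := by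
      apply continuous_matrix
      intro i' j'
      exact Complex.continuous_ofReal.comp ((continuous_apply j').comp (continuous_apply i'))
    have := map_exp (Complex.ofRealHom.mapMatrix
      : Matrix (Fin m) (Fin m) ℝ →+* Matrix (Fin m) (Fin m) ℂ) hcont (t • 𝒜)
    have h2 : Complex.ofRealHom.mapMatrix (t • 𝒜) = t • 𝒜.map Complex.ofReal := by
      ext i' j'
      simp [RingHom.mapMatrix_apply, Matrix.map_apply]
    rw [h2] at this
    exact this
  have hC := entry_decay_complex (𝒜.map Complex.ofReal) h i j
  have : ∀ t : ℝ, exp (t • 𝒜) i j = (exp (t • 𝒜.map Complex.ofReal) i j).re := by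
    intro t
    rw [← hmap t]
    simp [Matrix.map_apply]
  refine Tendsto.congr (fun t => (this t).symm) ?_
  have := (Complex.continuous_re.tendsto 0).comp hC
  simpa [Function.comp_def] using this

open Polynomial in
lemma lyap_inj_complex (A : Matrix (Fin m) (Fin m) ℂ)
    (h : ∀ μ ∈ spectrum ℂ A, μ.re < 0)
    (X : Matrix (Fin m) (Fin m) ℂ) (hX : A * X + X * Aᵀ = 0) : X = 0 := by
  classical
  have h1 : A * X = X * (-Aᵀ) := by
    rw [mul_neg]
    rw [add_eq_zero_iff_eq_neg] at hX
    exact hX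
  have hpow : ∀ n : ℕ, A ^ n * X = X * (-Aᵀ) ^ n := by
    intro n
    induction n with
    | zero => simp
    | succ n ih =>
      rw [pow_succ, pow_succ', mul_assoc, h1, ← mul_assoc, ih, mul_assoc,
        (Commute.refl (-Aᵀ)).pow_left n |>.eq]
  have hpoly : ∀ q : Polynomial ℂ, (aeval A q) * X = X * (aeval (-Aᵀ) q) := by
    intro q
    induction q using Polynomial.induction_on' with
    | add p q hp hq => rw [map_add, map_add, add_mul, mul_add, hp, hq]
    | monomial n a =>
      rw [aeval_monomial, aeval_monomial, mul_assoc, hpow n, ← mul_assoc, ← mul_assoc,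
        Algebra.commutes a X]
  -- the minimal polynomial
  set f : Module.End ℂ (Fin m → ℂ) := Matrix.toLinAlgEquiv' A with hf
  have hint : IsIntegral ℂ f := IsIntegral.of_finite ℂ f
  set q : Polynomial ℂ := minpoly ℂ f with hq
  have hmonic : q.Monic := minpoly.monic hint
  have haq : aeval A q = 0 := by
    have h0 : aeval f q = 0 := minpoly.aeval ℂ f
    have h2 : aeval f q = Matrix.toLinAlgEquiv' (aeval A q) := by
      rw [hf, aeval_algHom_apply (Matrix.toLinAlgEquiv' :
        Matrix (Fin m) (Fin m) ℂ ≃ₐ[ℂ] _) A q]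
    rw [h2] at h0
    exact (map_eq_zero_iff _ (AlgEquiv.injective _)).mp h0
  have hroots : ∀ r ∈ q.roots, r.re < 0 := by
    intro r hr
    apply h
    have hroot : q.IsRoot r := isRoot_of_mem_roots hr
    have hev : f.HasEigenvalue r := Module.End.hasEigenvalue_of_isRoot hroot
    have := Module.End.hasEigenvalue_iff_mem_spectrum.mp hev
    rwa [AlgEquiv.spectrum_eq (Matrix.toLinAlgEquiv') A] at this
  -- aeval (-Aᵀ) q is a unit
  have hfactor : ∀ a : ℂ, a.re < 0 → IsUnit (aeval (-Aᵀ) (Polynomial.X - Polynomial.C a)) := by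
    intro a ha
    have htr : (algebraMap ℂ (Matrix (Fin m) (Fin m) ℂ) a)ᵀ
        = algebraMap ℂ (Matrix (Fin m) (Fin m) ℂ) a := by
      rw [Algebra.algebraMap_eq_smul_one, Matrix.transpose_smul, Matrix.transpose_one]
    have hfac : aeval (-Aᵀ) (Polynomial.X - Polynomial.C a)
        = -((A + algebraMap ℂ (Matrix (Fin m) (Fin m) ℂ) a)ᵀ) := by
      rw [map_sub, aeval_X, aeval_C, Matrix.transpose_add, htr, neg_add, sub_eq_add_neg]
    rw [hfac, IsUnit.neg_iff, Matrix.isUnit_iff_isUnit_det, Matrix.det_transpose,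
      ← Matrix.isUnit_iff_isUnit_det]
    have hrepr : A + algebraMap ℂ (Matrix (Fin m) (Fin m) ℂ) a
        = -(algebraMap ℂ (Matrix (Fin m) (Fin m) ℂ) (-a) - A) := by
      rw [map_neg, neg_sub, sub_neg_eq_add, add_comm]
    rw [hrepr, IsUnit.neg_iff]
    have hnot : -a ∉ spectrum ℂ A := by
      intro hmem
      have := h _ hmem
      simp only [Complex.neg_re] at this
      linarith
    exact spectrum.notMem_iff.mp hnot
  have hunit : IsUnit (aeval (-Aᵀ) q) := by
    have hsplit : q = (q.roots.map fun r => Polynomial.X - Polynomial.C r).prod :=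
      (IsAlgClosed.splits q).eq_prod_roots_of_monic hmonic
    rw [hsplit]
    have key : ∀ s : Multiset ℂ, (∀ r ∈ s, r.re < 0) →
        IsUnit (aeval (-Aᵀ) ((s.map fun r => Polynomial.X - Polynomial.C r).prod)) := by
      intro s
      induction s using Multiset.induction_on with
      | empty => simp
      | cons a s ih =>
        intro hs
        rw [Multiset.map_cons, Multiset.prod_cons, _root_.map_mul]
        exact (hfactor a (hs a (Multiset.mem_cons_self a s))).mul
          (ih fun r hr => hs r (Multiset.mem_cons_of_mem hr))
    exact key q.roots hroots
  -- conclude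
  have h2 : X * aeval (-Aᵀ) q = 0 := by rw [← hpoly, haq, zero_mul]
  obtain ⟨u, hu⟩ := hunit
  calc X = X * (aeval (-Aᵀ) q * (↑u⁻¹ : Matrix (Fin m) (Fin m) ℂ)) := by
        rw [← hu, Units.mul_inv, mul_one]
    _ = 0 := by rw [← mul_assoc, h2, zero_mul]

lemma lyap_inj_real (𝒜 : Matrix (Fin m) (Fin m) ℝ)
    (h : ∀ μ ∈ spectrum ℂ (𝒜.map Complex.ofReal), μ.re < 0)
    (X : Matrix (Fin m) (Fin m) ℝ) (hX : 𝒜 * X + X * 𝒜ᵀ = 0) : X = 0 := by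
  have hmap : (𝒜.map Complex.ofReal) * (X.map Complex.ofReal)
      + (X.map Complex.ofReal) * (𝒜.map Complex.ofReal)ᵀ = 0 := by
    have h0 : ((𝒜 * X + X * 𝒜ᵀ).map Complex.ofReal) = 0 := by
      rw [hX]
      ext i j
      simp
    have h1 : ((𝒜 * X).map Complex.ofReal) = 𝒜.map Complex.ofReal * X.map Complex.ofReal :=
      Matrix.map_mul (f := Complex.ofRealHom)
    have h2 : ((X * 𝒜ᵀ).map Complex.ofReal) = X.map Complex.ofReal * (𝒜ᵀ).map Complex.ofReal :=
      Matrix.map_mul (f := Complex.ofRealHom)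
    rw [Matrix.map_add Complex.ofReal (fun a b => Complex.ofReal_add a b), h1, h2,
      Matrix.transpose_map] at h0
    exact h0
  have hX0 := lyap_inj_complex (𝒜.map Complex.ofReal) h (X.map Complex.ofReal) hmap
  ext i j
  have := congrFun (congrFun hX0 i) j
  simpa [Matrix.map_apply] using this

/-- The Lyapunov operator. -/
def lyapL (𝒜 : Matrix (Fin m) (Fin m) ℝ) :
    Matrix (Fin m) (Fin m) ℝ →ₗ[ℝ] Matrix (Fin m) (Fin m) ℝ where
  toFun X := 𝒜 * X + X * 𝒜ᵀ
  map_add' X Y := by noncomm_ring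
  map_smul' c X := by
    simp only [RingHom.id_apply, smul_add, Matrix.mul_smul, Matrix.smul_mul]

lemma lyap_exists (𝒜 : Matrix (Fin m) (Fin m) ℝ)
    (h : ∀ μ ∈ spectrum ℂ (𝒜.map Complex.ofReal), μ.re < 0)
    (C : Matrix (Fin m) (Fin m) ℝ) :
    ∃ P : Matrix (Fin m) (Fin m) ℝ, 𝒜 * P + P * 𝒜ᵀ = C ∧
      (∀ P', 𝒜 * P' + P' * 𝒜ᵀ = C → P' = P) := by
  have hinj : Function.Injective (lyapL 𝒜) := by
    intro a b hab
    have h0 : (lyapL 𝒜) (a - b) = 0 := by rw [map_sub, hab, sub_self]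
    have := lyap_inj_real 𝒜 h (a - b) h0
    exact sub_eq_zero.mp this
  have hsurj : Function.Surjective (lyapL 𝒜) :=
    LinearMap.injective_iff_surjective.mp hinj
  obtain ⟨P, hP⟩ := hsurj C
  exact ⟨P, hP, fun P' hP' => hinj (hP'.trans hP.symm)⟩

/-- Entry of a matrix as a continuous linear map. -/
def entryCLM (i j : Fin m) : Matrix (Fin m) (Fin m) ℝ →L[ℝ] ℝ :=
  LinearMap.toContinuousLinearMap
    ((LinearMap.proj j).comp (LinearMap.proj (R := ℝ) (φ := fun _ : Fin m => Fin m → ℝ) i))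

lemma entryCLM_apply (i j : Fin m) (M : Matrix (Fin m) (Fin m) ℝ) :
    entryCLM i j M = M i j := rfl

lemma hasDerivWithinAt_entry {f : ℝ → Matrix (Fin m) (Fin m) ℝ} {f' : Matrix (Fin m) (Fin m) ℝ}
    {s : Set ℝ} {t : ℝ} (h : HasDerivWithinAt f f' s t) (i j : Fin m) :
    HasDerivWithinAt (fun u => f u i j) (f' i j) s t :=
  (entryCLM i j).hasFDerivAt.comp_hasDerivWithinAt t h

lemma hasDerivWithinAt_matrix {f : ℝ → Matrix (Fin m) (Fin m) ℝ} {f' : Matrix (Fin m) (Fin m) ℝ}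
    {s : Set ℝ} {t : ℝ} (h : ∀ i j, HasDerivWithinAt (fun u => f u i j) (f' i j) s t) :
    HasDerivWithinAt f f' s t := by
  classical
  have hrw : ∀ (M : Matrix (Fin m) (Fin m) ℝ),
      M = ∑ i : Fin m, ∑ j : Fin m, (M i j) • Matrix.single i j (1 : ℝ) := by
    intro M
    conv_lhs => rw [Matrix.matrix_eq_sum_single M]
    refine Finset.sum_congr rfl fun i _ => Finset.sum_congr rfl fun j _ => ?_
    rw [Matrix.smul_single, smul_eq_mul, mul_one]
  have hsum : HasDerivWithinAt
      (fun u => ∑ i : Fin m, ∑ j : Fin m, (f u i j) • Matrix.single i j (1 : ℝ))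
      (∑ i : Fin m, ∑ j : Fin m, (f' i j) • Matrix.single i j (1 : ℝ)) s t := by
    refine HasDerivWithinAt.fun_sum fun i _ => HasDerivWithinAt.fun_sum fun j _ => ?_
    exact (h i j).smul_const _
  rw [← hrw f'] at hsum
  exact hsum.congr (fun u _ => hrw (f u)) (hrw (f t))

lemma exp_inv_mul (𝒜 : Matrix (Fin m) (Fin m) ℝ) (t : ℝ) :
    exp (t • 𝒜) * exp ((-t) • 𝒜) = 1 := by
  rw [← Matrix.exp_add_of_commute _ _ (((Commute.refl 𝒜).smul_left t).smul_right (-t)), ← add_smul,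
    add_neg_cancel, zero_smul, exp_zero]

lemma exp_inv_mul' (𝒜 : Matrix (Fin m) (Fin m) ℝ) (t : ℝ) :
    exp ((-t) • 𝒜) * exp (t • 𝒜) = 1 := by
  rw [← Matrix.exp_add_of_commute _ _ (((Commute.refl 𝒜).smul_left (-t)).smul_right t), ← add_smul,
    neg_add_cancel, zero_smul, exp_zero]

lemma matrix_ode_sol (𝒜 : Matrix (Fin m) (Fin m) ℝ) (D : ℝ → Matrix (Fin m) (Fin m) ℝ)
    (hD : ∀ t ∈ Set.Ici (0 : ℝ), HasDerivWithinAt D (𝒜 * D t + D t * 𝒜ᵀ) (Set.Ici 0) t) :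
    ∀ t ∈ Set.Ici (0 : ℝ), D t = exp (t • 𝒜) * D 0 * exp (t • 𝒜ᵀ) := by
  set G : ℝ → Matrix (Fin m) (Fin m) ℝ :=
    fun t => exp ((-t) • 𝒜) * D t * exp ((-t) • 𝒜ᵀ) with hGdef
  have hG : ∀ t ∈ Set.Ici (0 : ℝ), HasDerivWithinAt G 0 (Set.Ici 0) t := by
    intro t ht
    have hE1 : HasDerivAt (fun u : ℝ => exp ((-u) • 𝒜)) (-(𝒜 * exp ((-t) • 𝒜))) t := by
      have h0 : HasDerivAt (fun u : ℝ => exp (u • 𝒜)) (𝒜 * exp ((-t) • 𝒜)) (-t) :=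
        hasDerivAt_exp_smul_const' (𝕂 := ℝ) 𝒜 (-t)
      have h1 := h0.scomp t (hasDerivAt_neg t)
      simp only [Function.comp_def, neg_smul, smul_neg] at h1 ⊢
      simp at h1
      exact h1
    have hE2 : HasDerivAt (fun u : ℝ => exp ((-u) • 𝒜ᵀ)) (-(exp ((-t) • 𝒜ᵀ) * 𝒜ᵀ)) t := by
      have h0 : HasDerivAt (fun u : ℝ => exp (u • 𝒜ᵀ)) (exp ((-t) • 𝒜ᵀ) * 𝒜ᵀ) (-t) :=
        hasDerivAt_exp_smul_const (𝕂 := ℝ) 𝒜ᵀ (-t)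
      have h1 := h0.scomp t (hasDerivAt_neg t)
      simp only [Function.comp_def, neg_smul, smul_neg] at h1 ⊢
      simp at h1
      exact h1
    have hprod : HasDerivWithinAt (fun u => exp ((-u) • 𝒜) * D u * exp ((-u) • 𝒜ᵀ))
        ((-(𝒜 * exp ((-t) • 𝒜)) * D t + exp ((-t) • 𝒜) * (𝒜 * D t + D t * 𝒜ᵀ))
            * exp ((-t) • 𝒜ᵀ)
          + exp ((-t) • 𝒜) * D t * -(exp ((-t) • 𝒜ᵀ) * 𝒜ᵀ)) (Set.Ici 0) t :=
      ((hE1.hasDerivWithinAt.mul (hD t ht)).mul hE2.hasDerivWithinAt)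
    have hzero : (-(𝒜 * exp ((-t) • 𝒜)) * D t + exp ((-t) • 𝒜) * (𝒜 * D t + D t * 𝒜ᵀ))
            * exp ((-t) • 𝒜ᵀ)
          + exp ((-t) • 𝒜) * D t * -(exp ((-t) • 𝒜ᵀ) * 𝒜ᵀ) = 0 := by
      have h1 : exp ((-t) • 𝒜) * 𝒜 = 𝒜 * exp ((-t) • 𝒜) :=
        (((Commute.refl 𝒜).smul_left (-t)).exp_left).eq
      have h2 : exp ((-t) • 𝒜ᵀ) * 𝒜ᵀ = 𝒜ᵀ * exp ((-t) • 𝒜ᵀ) :=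
        (((Commute.refl 𝒜ᵀ).smul_left (-t)).exp_left).eq
      set E1 := exp ((-t) • 𝒜)
      set E2 := exp ((-t) • 𝒜ᵀ)
      have h1' : E1 * (𝒜 * (D t * E2)) = 𝒜 * (E1 * (D t * E2)) := by
        rw [← mul_assoc, h1, mul_assoc]
      simp only [mul_add, add_mul, neg_mul, mul_neg, mul_assoc]
      rw [h1', ← h2]
      abel
    rw [hzero] at hprod
    exact hprod
  intro t ht
  -- G is constant on [0, t]
  have hconst : G t = G 0 := by
    rcases eq_or_lt_of_le (Set.mem_Ici.mp ht) with h0 | h0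
    · rw [← h0]
    have hcont : ContinuousOn G (Set.Icc 0 t) := by
      intro s hs
      exact ((hG s hs.1).continuousWithinAt).mono (Set.Icc_subset_Ici_self)
    have hderiv : ∀ s ∈ Set.Ico 0 t, HasDerivWithinAt G 0 (Set.Ici s) s := by
      intro s hs
      exact (hG s hs.1).mono (Set.Ici_subset_Ici.mpr hs.1)
    exact constant_of_has_deriv_right_zero hcont hderiv t (Set.mem_Icc.mpr ⟨Set.mem_Ici.mp ht, le_refl t⟩)
  have hG0 : G 0 = D 0 := by
    simp [hGdef, neg_zero, zero_smul, exp_zero]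
  calc D t = 1 * D t * 1 := by rw [one_mul, mul_one]
    _ = (exp (t • 𝒜) * exp ((-t) • 𝒜)) * D t * (exp ((-t) • 𝒜ᵀ) * exp (t • 𝒜ᵀ)) := by
        rw [exp_inv_mul, exp_inv_mul']
    _ = exp (t • 𝒜) * G t * exp (t • 𝒜ᵀ) := by
        simp only [hGdef, mul_assoc]
    _ = exp (t • 𝒜) * D 0 * exp (t • 𝒜ᵀ) := by rw [hconst, hG0]

lemma exp_transpose_smul (𝒜 : Matrix (Fin m) (Fin m) ℝ) (t : ℝ) :
    exp (t • 𝒜ᵀ) = (exp (t • 𝒜))ᵀ := by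
  rw [← Matrix.transpose_smul, Matrix.exp_transpose]

lemma sandwich_decay (𝒜 : Matrix (Fin m) (Fin m) ℝ)
    (h : ∀ μ ∈ spectrum ℂ (𝒜.map Complex.ofReal), μ.re < 0)
    (C : Matrix (Fin m) (Fin m) ℝ) (i j : Fin m) :
    Tendsto (fun t : ℝ => (exp (t • 𝒜) * C * exp (t • 𝒜ᵀ)) i j) atTop (nhds 0) := by
  have hentry : ∀ t : ℝ, (exp (t • 𝒜) * C * exp (t • 𝒜ᵀ)) i j
      = ∑ l : Fin m, ∑ k : Fin m, exp (t • 𝒜) i k * C k l * exp (t • 𝒜) j l := by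
    intro t
    rw [exp_transpose_smul]
    simp [Matrix.mul_apply, Matrix.transpose_apply, Finset.sum_mul]
  have hlim : Tendsto (fun t : ℝ => ∑ l : Fin m, ∑ k : Fin m,
      exp (t • 𝒜) i k * C k l * exp (t • 𝒜) j l) atTop (nhds 0) := by
    have h0 : (0 : ℝ) = ∑ _l : Fin m, ∑ _k : Fin m, (0 : ℝ) := by simp
    rw [h0]
    refine tendsto_finset_sum _ fun l _ => tendsto_finset_sum _ fun k _ => ?_
    have := ((entry_decay 𝒜 h i k).mul_const (C k l)).mul (entry_decay 𝒜 h j l)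
    simpa using this
  exact hlim.congr fun t => (hentry t).symm

/-- The quadratic-form continuous linear map `M ↦ x ⬝ᵥ M *ᵥ x`. -/
def quadCLM (x : Fin m → ℝ) : Matrix (Fin m) (Fin m) ℝ →L[ℝ] ℝ :=
  LinearMap.toContinuousLinearMap
    { toFun := fun M => x ⬝ᵥ M.mulVec x
      map_add' := fun M N => by
        show x ⬝ᵥ (M + N).mulVec x = x ⬝ᵥ M.mulVec x + x ⬝ᵥ N.mulVec x
        rw [Matrix.add_mulVec, dotProduct_add]
      map_smul' := fun c M => by
        show x ⬝ᵥ (c • M).mulVec x = c • (x ⬝ᵥ M.mulVec x)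
        rw [Matrix.smul_mulVec, dotProduct_smul, smul_eq_mul] }

lemma quadCLM_apply (x : Fin m → ℝ) (M : Matrix (Fin m) (Fin m) ℝ) :
    quadCLM x M = x ⬝ᵥ M.mulVec x := rfl

lemma lyap_posSemidef (𝒜 : Matrix (Fin m) (Fin m) ℝ) {p : ℕ} (ℬ : Matrix (Fin m) (Fin p) ℝ)
    (h : ∀ μ ∈ spectrum ℂ (𝒜.map Complex.ofReal), μ.re < 0)
    (P : Matrix (Fin m) (Fin m) ℝ) (hsym : Pᵀ = P)
    (heq : 𝒜 * P + P * 𝒜ᵀ + ℬ * ℬᵀ = 0) : P.PosSemidef := by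
  rw [Matrix.posSemidef_iff_dotProduct_mulVec]
  constructor
  · rw [Matrix.IsHermitian, Matrix.conjTranspose_eq_transpose_of_trivial, hsym]
  intro x
  rw [star_trivial]
  -- the function g
  set K : ℝ → Matrix (Fin m) (Fin m) ℝ := fun t => exp (t • 𝒜) * P * exp (t • 𝒜ᵀ) with hK
  set g : ℝ → ℝ := fun t => quadCLM x (K t) with hg
  have hneg : 𝒜 * P + P * 𝒜ᵀ = -(ℬ * ℬᵀ) := by
    rw [add_eq_zero_iff_eq_neg] at heq
    exact heq
  have hKderiv : ∀ t : ℝ, HasDerivAt K (exp (t • 𝒜) * (-(ℬ * ℬᵀ)) * exp (t • 𝒜ᵀ)) t := by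
    intro t
    have hE1 : HasDerivAt (fun u : ℝ => exp (u • 𝒜)) (𝒜 * exp (t • 𝒜)) t :=
      hasDerivAt_exp_smul_const' (𝕂 := ℝ) 𝒜 t
    have hE2 : HasDerivAt (fun u : ℝ => exp (u • 𝒜ᵀ)) (exp (t • 𝒜ᵀ) * 𝒜ᵀ) t :=
      hasDerivAt_exp_smul_const (𝕂 := ℝ) 𝒜ᵀ t
    have hprod := (hE1.mul_const P).mul hE2
    have hval : 𝒜 * exp (t • 𝒜) * P * exp (t • 𝒜ᵀ)
          + exp (t • 𝒜) * P * (exp (t • 𝒜ᵀ) * 𝒜ᵀ)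
        = exp (t • 𝒜) * (-(ℬ * ℬᵀ)) * exp (t • 𝒜ᵀ) := by
      have h1 : 𝒜 * exp (t • 𝒜) = exp (t • 𝒜) * 𝒜 :=
        (((Commute.refl 𝒜).smul_left t).exp_left).eq.symm
      have h2 : exp (t • 𝒜ᵀ) * 𝒜ᵀ = 𝒜ᵀ * exp (t • 𝒜ᵀ) :=
        (((Commute.refl 𝒜ᵀ).smul_left t).exp_left).eq
      rw [← hneg, h1, h2]
      simp only [mul_add, add_mul, mul_assoc]
    rw [← hval]
    exact hprod
  have hgderiv : ∀ t : ℝ, HasDerivAt g (quadCLM x (exp (t • 𝒜) * (-(ℬ * ℬᵀ)) * exp (t • 𝒜ᵀ))) t :=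
    fun t => (quadCLM x).hasFDerivAt.comp_hasDerivAt t (hKderiv t)
  have hgderiv_nonpos : ∀ t : ℝ,
      quadCLM x (exp (t • 𝒜) * (-(ℬ * ℬᵀ)) * exp (t • 𝒜ᵀ)) ≤ 0 := by
    intro t
    have hMM : exp (t • 𝒜) * (-(ℬ * ℬᵀ)) * exp (t • 𝒜ᵀ)
        = -((exp (t • 𝒜) * ℬ) * (exp (t • 𝒜) * ℬ)ᵀ) := by
      rw [exp_transpose_smul, Matrix.transpose_mul]
      simp only [neg_mul, mul_neg, Matrix.mul_assoc]
    rw [hMM, quadCLM_apply]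
    set M := exp (t • 𝒜) * ℬ with hM
    rw [Matrix.neg_mulVec, dotProduct_neg, neg_nonpos]
    rw [← Matrix.mulVec_mulVec, Matrix.dotProduct_mulVec, ← Matrix.mulVec_transpose]
    exact Finset.sum_nonneg fun i _ => mul_self_nonneg _
  -- g is antitone on [0, ∞)
  have hanti : AntitoneOn g (Set.Ici (0 : ℝ)) := by
    refine antitoneOn_of_deriv_nonpos (convex_Ici 0) ?_ ?_ ?_
    · exact fun s _ => (hgderiv s).continuousAt.continuousWithinAt
    · exact fun s _ => (hgderiv s).differentiableAt.differentiableWithinAt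
    · intro s _
      rw [(hgderiv s).deriv]
      exact hgderiv_nonpos s
  -- g tends to 0
  have hglim : Tendsto g atTop (nhds 0) := by
    have hrepr : ∀ t : ℝ, g t = ∑ i : Fin m, ∑ j : Fin m, x i * (K t i j * x j) := by
      intro t
      show quadCLM x (K t) = _
      rw [quadCLM_apply]
      simp [dotProduct, Matrix.mulVec, Finset.mul_sum]
    have h0 : (0 : ℝ) = ∑ _i : Fin m, ∑ _j : Fin m, (0 : ℝ) := by simp
    have hlim : Tendsto (fun t => ∑ i : Fin m, ∑ j : Fin m, x i * (K t i j * x j))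
        atTop (nhds 0) := by
      rw [h0]
      refine tendsto_finset_sum _ fun i _ => tendsto_finset_sum _ fun j _ => ?_
      have := ((sandwich_decay 𝒜 h P i j).mul_const (x j)).const_mul (x i)
      simpa using this
    exact hlim.congr fun t => (hrepr t).symm
  -- conclude
  have hg0 : g 0 = x ⬝ᵥ P.mulVec x := by
    show quadCLM x (K 0) = _
    rw [quadCLM_apply]
    simp [hK, zero_smul, exp_zero]
  have hle : ∀ᶠ T in (atTop : Filter ℝ), g T ≤ g 0 := by
    filter_upwards [eventually_ge_atTop (0 : ℝ)] with T hT
    exact hanti (Set.mem_Ici.mpr le_rfl) (Set.mem_Ici.mpr hT) hT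
  have := le_of_tendsto hglim hle
  rwa [hg0] at this

/-- for a Hurwitz matrix `𝒜` and any `ℬ`, the Lyapunov equation
`𝒜P + P𝒜ᵀ + ℬℬᵀ = 0` has a unique symmetric solution, this solution is positive
semidefinite, and every solution of the matrix ODE `dP/dt = 𝒜P + P𝒜ᵀ + ℬℬᵀ` with
symmetric initial condition converges (entrywise) to it as `t → ∞`. -/
theorem lyapunov_equation_of_hurwitz
    (m p : ℕ) (𝒜 : Matrix (Fin m) (Fin m) ℝ) (ℬ : Matrix (Fin m) (Fin p) ℝ)
    (hstable : ∀ μ ∈ spectrum ℂ (𝒜.map Complex.ofReal), μ.re < 0) :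
    ∃ P : Matrix (Fin m) (Fin m) ℝ,
      -- (i) existence, uniqueness among symmetric matrices, and positive semidefiniteness
      (Pᵀ = P ∧ 𝒜 * P + P * 𝒜ᵀ + ℬ * ℬᵀ = 0) ∧
      (∀ P' : Matrix (Fin m) (Fin m) ℝ,
        P'ᵀ = P' → 𝒜 * P' + P' * 𝒜ᵀ + ℬ * ℬᵀ = 0 → P' = P) ∧
      P.PosSemidef ∧
      -- (ii) convergence of solutions of the matrix differential equation
      (∀ P0 : Matrix (Fin m) (Fin m) ℝ, P0ᵀ = P0 →
        ∀ Pt : ℝ → Matrix (Fin m) (Fin m) ℝ, Pt 0 = P0 →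
          (∀ i j : Fin m, ∀ t ∈ Set.Ici (0 : ℝ),
            HasDerivWithinAt (fun s => Pt s i j)
              ((𝒜 * Pt t + Pt t * 𝒜ᵀ + ℬ * ℬᵀ) i j) (Set.Ici 0) t) →
          ∀ i j : Fin m,
            Tendsto (fun t => Pt t i j) atTop (nhds (P i j))) := by
  obtain ⟨P, hPeq, hPuniq⟩ := lyap_exists 𝒜 hstable (-(ℬ * ℬᵀ))
  have hlyap : 𝒜 * P + P * 𝒜ᵀ + ℬ * ℬᵀ = 0 := by rw [hPeq]; simp
  have hsym : Pᵀ = P := by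
    apply hPuniq
    have h1 : (𝒜 * P + P * 𝒜ᵀ)ᵀ = (-(ℬ * ℬᵀ))ᵀ := congrArg Matrix.transpose hPeq
    simp only [Matrix.transpose_add, Matrix.transpose_mul, Matrix.transpose_neg,
      Matrix.transpose_transpose] at h1
    rw [add_comm] at h1
    exact h1
  have h9 : ℬ * ℬᵀ = -(𝒜 * P + P * 𝒜ᵀ) := eq_neg_of_add_eq_zero_right hlyap
  refine ⟨P, ⟨hsym, hlyap⟩, ?_, ?_, ?_⟩
  · intro P' hsym' heq'
    exact hPuniq P' (eq_neg_of_add_eq_zero_left heq')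
  · exact lyap_posSemidef 𝒜 ℬ hstable P hsym hlyap
  · intro P0 hP0sym Pt hPt0 hPtderiv i j
    set D : ℝ → Matrix (Fin m) (Fin m) ℝ := fun t => Pt t - P with hDdef
    have hDderiv : ∀ t ∈ Set.Ici (0 : ℝ),
        HasDerivWithinAt D (𝒜 * D t + D t * 𝒜ᵀ) (Set.Ici 0) t := by
      intro t ht
      have hval : 𝒜 * D t + D t * 𝒜ᵀ = 𝒜 * Pt t + Pt t * 𝒜ᵀ + ℬ * ℬᵀ := by
        rw [hDdef]
        simp only [Matrix.mul_sub, Matrix.sub_mul]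
        rw [h9]
        abel
      apply hasDerivWithinAt_matrix
      intro i' j'
      have hentry := (hPtderiv i' j' t ht).sub_const (P i' j')
      have hval' : (𝒜 * D t + D t * 𝒜ᵀ) i' j'
          = (𝒜 * Pt t + Pt t * 𝒜ᵀ + ℬ * ℬᵀ) i' j' := by rw [hval]
      rw [hval']
      exact hentry
    have hDsol := matrix_ode_sol 𝒜 D hDderiv
    have hDlim : Tendsto (fun t => D t i j) atTop (nhds 0) := by
      refine (sandwich_decay 𝒜 hstable (D 0) i j).congr' ?_
      filter_upwards [eventually_ge_atTop (0 : ℝ)] with t ht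
      rw [hDsol t ht]
    have hfinal := hDlim.add (tendsto_const_nhds (x := P i j))
    rw [zero_add] at hfinal
    refine hfinal.congr fun t => ?_
    show D t i j + P i j = Pt t i j
    rw [hDdef]
    show Pt t i j - P i j + P i j = Pt t i j
    rw [sub_add_cancel]
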